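/- Let n, k, b, ℓ be integers with n ≥ 1, k ≥ 1, b ≥ 1, 0 ≤ ℓ < n, and b·(n−ℓ) = k·n. Let P ⊆ {1,…,n}×{1,…,n} be a set containing exactly ℓ elements in each row and exactly ℓ elements in each column. Index the rows and columns of a (k·n²)×(k·n²) matrix by pairs (i,r) with i ∈ {1,…,n} and r ∈ {1,…,kn}, and for (i,j) ∈ {1,…,n}² let block (i,j) be the set of positions ((i,r),(j,c)) with r,c ∈ {1,…,kn}. Then the number of permutation matrices of order k·n² that have no 1 in any block (i,j) with (i,j) ∈ P and exactly b ones in every block (i,j) with (i,j) ∉ P equals ((kn)!)^{2n} / (b!)^{n(n−ℓ)}. -/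
import Mathlib


open Nat Finset

/-- The fiber of a sigma type over the first coordinate. -/
def sigmaFstSubtypeEquiv {β : Type*} (γ : β → Type*) (j : β) :
    {s : Σ j' : β, γ j' // s.1 = j} ≃ γ j where
  toFun s := s.prop ▸ s.val.2
  invFun y := ⟨⟨j, y⟩, rfl⟩
  left_inv := by rintro ⟨⟨j', x⟩, rfl⟩; rfl
  right_inv y := rfl

/-- An equivalence `α ≃ Σ j, γ j` is the same as a function `g : α → β` together
with equivalences between the fibers of `g` and the `γ j`. -/
def keyEquiv {α β : Type*} (γ : β → Type*) :
    (α ≃ Σ j : β, γ j) ≃ Σ g : α → β, ∀ j : β, {a // g a = j} ≃ γ j where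
  toFun e := ⟨fun a => (e a).1, fun j =>
    (e.subtypeEquiv fun _ => Iff.rfl).trans (sigmaFstSubtypeEquiv γ j)⟩
  invFun x := (Equiv.sigmaFiberEquiv x.1).symm.trans (Equiv.sigmaCongrRight x.2)
  left_inv e := Equiv.ext fun a => rfl
  right_inv := by
    rintro ⟨g, E⟩
    refine Sigma.ext rfl (heq_of_eq ?_)
    funext j
    apply Equiv.ext
    rintro ⟨x, rfl⟩
    rfl

section helpers
variable {α β : Type*}

lemma natCard_equiv_eq_factorial [Fintype α] [Fintype β]
    (h : Fintype.card α = Fintype.card β) :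
    Nat.card (α ≃ β) = (Fintype.card α)! := by
  classical
  rw [Nat.card_eq_fintype_card, Fintype.card_equiv (Fintype.equivOfCardEq h)]

lemma natCard_equiv_eq_zero [Finite α] [Finite β]
    (h : Nat.card α ≠ Nat.card β) : Nat.card (α ≃ β) = 0 := by
  have : IsEmpty (α ≃ β) := ⟨fun e => h (Nat.card_congr e)⟩
  exact Nat.card_of_isEmpty

lemma natCard_sigma_fin {ι : Type*} [Fintype ι] {T : ι → Type*} [∀ i, Fintype (T i)] :
    Nat.card (Σ i, T i) = ∑ i, Nat.card (T i) := by
  simp [Nat.card_eq_fintype_card]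

lemma natCard_sigma_const {ι : Type*} {T : ι → Type*} {c : ℕ} [∀ i, Finite (T i)]
    (h : ∀ i, Nat.card (T i) = c) : Nat.card (Σ i, T i) = Nat.card ι * c := by
  have e : ∀ i, T i ≃ Fin c := fun i => Finite.equivFinOfCardEq (h i)
  rw [Nat.card_congr ((Equiv.sigmaCongrRight e).trans (Equiv.sigmaEquivProd ι (Fin c))),
    Nat.card_prod, Nat.card_eq_fintype_card (α := Fin c), Fintype.card_fin]

/-- The number of functions with prescribed fiber sizes, times the product of the
factorials of the fiber sizes, is the factorial of the cardinality of the source. -/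
lemma count_fiber_functions [Fintype α] [Fintype β] (c : β → ℕ)
    (h : ∑ j, c j = Fintype.card α) :
    Nat.card {g : α → β // ∀ j, Nat.card {a // g a = j} = c j} * ∏ j, (c j)! =
      (Fintype.card α)! := by
  classical
  have key : Nat.card (Σ g : α → β, ∀ j : β, {a // g a = j} ≃ Fin (c j)) =
      (Fintype.card α)! := by
    rw [Nat.card_congr (keyEquiv fun j => Fin (c j)).symm]
    exact natCard_equiv_eq_factorial (by rw [Fintype.card_sigma]; simp [h])
  rw [natCard_sigma_fin] at key
  have hpt : ∀ g : α → β, Nat.card (∀ j : β, {a // g a = j} ≃ Fin (c j)) =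
      if (∀ j, Nat.card {a // g a = j} = c j) then ∏ j, (c j)! else 0 := by
    intro g
    rw [Nat.card_pi]
    split_ifs with hp
    · exact Finset.prod_congr rfl fun j _ =>
        natCard_equiv_eq_factorial (by rw [← Nat.card_eq_fintype_card, hp j, Fintype.card_fin]) |>.trans
          (by rw [← Nat.card_eq_fintype_card, hp j])
    · push_neg at hp
      obtain ⟨j₀, hj₀⟩ := hp
      exact Finset.prod_eq_zero (Finset.mem_univ j₀)
        (natCard_equiv_eq_zero (by simpa using hj₀))
  rw [Finset.sum_congr rfl fun g _ => hpt g, ← Finset.sum_filter,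
    Finset.sum_const, smul_eq_mul] at key
  rw [Nat.card_eq_fintype_card, Fintype.card_subtype]
  exact key
end helpers


/-- Counting permutation matrices of order `k·n²` (rows and columns indexed by
pairs `(i, r)` with `i : Fin n`, `r : Fin (k·n)`; the matrix of `σ` has a `1` at
position `((i,r), (j,c))` iff `σ (i,r) = (j,c)`) that avoid all blocks `(i,j) ∈ P`
and have exactly `b` ones in every other block, where `P` has exactly `ℓ` cells
in every row and column. -/
theorem count_block_permutation_matrices (n k b ℓ : ℕ)
    (hn : 1 ≤ n) (hk : 1 ≤ k) (hb : 1 ≤ b) (hℓ : ℓ < n)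
    (hbal : b * (n - ℓ) = k * n)
    (P : Finset (Fin n × Fin n))
    (hrow : ∀ i : Fin n, (P.filter fun p => p.1 = i).card = ℓ)
    (hcol : ∀ j : Fin n, (P.filter fun p => p.2 = j).card = ℓ) :
    (Nat.card {σ : Equiv.Perm (Fin n × Fin (k * n)) //
        (∀ (i j : Fin n), (i, j) ∈ P → ∀ r : Fin (k * n), (σ (i, r)).1 ≠ j) ∧
        (∀ (i j : Fin n), (i, j) ∉ P →
          Nat.card {r : Fin (k * n) // (σ (i, r)).1 = j} = b)} : ℝ)
      = ((k * n)! : ℝ) ^ (2 * n) / (b ! : ℝ) ^ (n * (n - ℓ)) := by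
  classical
  set N := k * n with hN
  set A := Fin n × Fin N with hA
  -- the block pattern
  set m : Fin n → Fin n → ℕ := fun i j => if (i, j) ∈ P then 0 else b with hm
  -- condition on the first-coordinate pattern
  set Cond' : (A → Fin n) → Prop := fun g =>
    (∀ (i j : Fin n), (i, j) ∈ P → ∀ r : Fin N, g (i, r) ≠ j) ∧
    (∀ (i j : Fin n), (i, j) ∉ P → Nat.card {r : Fin N // g (i, r) = j} = b) with hCond'
  -- counting rows/columns of P
  have rowP : ∀ i : Fin n, (univ.filter fun j => (i, j) ∈ P).card = ℓ := by
    intro i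
    rw [← hrow i]
    apply Finset.card_bij' (fun j _ => (i, j)) (fun p _ => p.2)
    · intro j hj
      simp only [mem_filter, mem_univ, true_and] at hj ⊢
      simp [hj]
    · intro p hp
      simp only [mem_filter, mem_univ, true_and] at hp ⊢
      rcases hp with ⟨h1, h2⟩
      have : (i, p.2) = p := by rw [← h2]
      rw [this]
      exact h1
    · intro j hj; rfl
    · intro p hp
      simp only [mem_filter] at hp
      rw [← hp.2]
  have colP : ∀ j : Fin n, (univ.filter fun i => (i, j) ∈ P).card = ℓ := by
    intro j
    rw [← hcol j]
    apply Finset.card_bij' (fun i _ => (i, j)) (fun p _ => p.1)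
    · intro i hi
      simp only [mem_filter, mem_univ, true_and] at hi ⊢
      simp [hi]
    · intro p hp
      simp only [mem_filter, mem_univ, true_and] at hp ⊢
      rcases hp with ⟨h1, h2⟩
      have : (p.1, j) = p := by rw [← h2]
      rw [this]
      exact h1
    · intro i hi; rfl
    · intro p hp
      simp only [mem_filter] at hp
      rw [← hp.2]
  have rowPnot : ∀ i : Fin n, (univ.filter fun j => (i, j) ∉ P).card = n - ℓ := by
    intro i
    have h2 := Finset.card_filter_add_card_filter_not
      (s := (univ : Finset (Fin n))) (p := fun j => (i, j) ∈ P)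
    rw [rowP i, Finset.card_univ, Fintype.card_fin] at h2
    omega
  have colPnot : ∀ j : Fin n, (univ.filter fun i => (i, j) ∉ P).card = n - ℓ := by
    intro j
    have h2 := Finset.card_filter_add_card_filter_not
      (s := (univ : Finset (Fin n))) (p := fun i => (i, j) ∈ P)
    rw [colP j, Finset.card_univ, Fintype.card_fin] at h2
    omega
  -- row sums and column sums of m
  have rowsum : ∀ i : Fin n, ∑ j, m i j = N := by
    intro i
    rw [hm]
    simp only []
    rw [Finset.sum_ite, Finset.sum_const, Finset.sum_const, rowPnot i]
    simp only [smul_eq_mul, mul_zero, zero_add]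
    rw [mul_comm]
    exact hbal
  have colsum : ∀ j : Fin n, ∑ i, m i j = N := by
    intro j
    rw [hm]
    simp only []
    rw [Finset.sum_ite, Finset.sum_const, Finset.sum_const, colPnot j]
    simp only [smul_eq_mul, mul_zero, zero_add]
    rw [mul_comm]
    exact hbal
  have mprod : ∀ i : Fin n, ∏ j, (m i j)! = b ! ^ (n - ℓ) := by
    intro i
    rw [hm]
    simp only []
    simp only [apply_ite Nat.factorial, Nat.factorial_zero]
    rw [Finset.prod_ite, Finset.prod_const, Finset.prod_const, rowPnot i]
    simp
  -- per-row count
  have rowcount : ∀ i : Fin n,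
      Nat.card {h : Fin N → Fin n // ∀ j, Nat.card {r // h r = j} = m i j} * b ! ^ (n - ℓ)
        = N ! := by
    intro i
    have := count_fiber_functions (α := Fin N) (β := Fin n) (m i)
      (by rw [Fintype.card_fin]; exact rowsum i)
    rw [mprod i, Fintype.card_fin] at this
    exact this
  -- fibers of a good pattern all have size N
  have fibercard : ∀ g : A → Fin n, Cond' g → ∀ j : Fin n,
      Fintype.card {a : A // g a = j} = N := by
    intro g hg j
    rw [← Nat.card_eq_fintype_card,
      Nat.card_congr (Equiv.subtypeProdEquivSigmaSubtype fun i r => g (i, r) = j),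
      natCard_sigma_fin]
    have : ∀ i : Fin n, Nat.card {r : Fin N // g (i, r) = j} = m i j := by
      intro i
      rw [hm]
      simp only []
      split_ifs with hij
      · have : IsEmpty {r : Fin N // g (i, r) = j} :=
          ⟨fun r => hg.1 i j hij r.1 r.2⟩
        exact Nat.card_of_isEmpty
      · exact hg.2 i j hij
    rw [Finset.sum_congr rfl fun i _ => this i, colsum j]
  -- the master equivalence
  have E1 : {σ : Equiv.Perm A //
        (∀ (i j : Fin n), (i, j) ∈ P → ∀ r : Fin N, (σ (i, r)).1 ≠ j) ∧
        (∀ (i j : Fin n), (i, j) ∉ P →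
          Nat.card {r : Fin N // (σ (i, r)).1 = j} = b)} ≃
      Σ x : {g : A → Fin n // Cond' g}, ∀ j : Fin n, {a : A // x.1 a = j} ≃ Fin N := by
    exact ((((Equiv.equivCongr (Equiv.refl A) (Equiv.sigmaEquivProd (Fin n) (Fin N)).symm).trans
      (keyEquiv fun _ => Fin N)).subtypeEquiv fun σ => Iff.rfl).trans
      (Equiv.subtypeSigmaEquiv (fun g : A → Fin n => ∀ j : Fin n, {a : A // g a = j} ≃ Fin N)
        Cond'))
  have cardS : Nat.card {σ : Equiv.Perm A //
        (∀ (i j : Fin n), (i, j) ∈ P → ∀ r : Fin N, (σ (i, r)).1 ≠ j) ∧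
        (∀ (i j : Fin n), (i, j) ∉ P →
          Nat.card {r : Fin N // (σ (i, r)).1 = j} = b)} =
      Nat.card {g : A → Fin n // Cond' g} * (N ! ^ n) := by
    rw [Nat.card_congr E1]
    refine natCard_sigma_const fun x => ?_
    rw [Nat.card_pi]
    have : ∀ j : Fin n, Nat.card ({a : A // x.1 a = j} ≃ Fin N) = N ! := by
      intro j
      rw [natCard_equiv_eq_factorial (by rw [fibercard x.1 x.2 j, Fintype.card_fin]),
        fibercard x.1 x.2 j]
    rw [Finset.prod_congr rfl fun j _ => this j, Finset.prod_const, Finset.card_univ,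
      Fintype.card_fin]
  -- counting the good patterns
  have cardG : Nat.card {g : A → Fin n // Cond' g} =
      ∏ i, Nat.card {h : Fin N → Fin n // ∀ j, Nat.card {r // h r = j} = m i j} := by
    have iff1 : ∀ g : A → Fin n, Cond' g ↔
        ∀ i, ∀ j, Nat.card {r : Fin N // g (i, r) = j} = m i j := by
      intro g
      constructor
      · intro hg i j
        rw [hm]
        simp only []
        split_ifs with hij
        · have : IsEmpty {r : Fin N // g (i, r) = j} :=
            ⟨fun r => hg.1 i j hij r.1 r.2⟩
          exact Nat.card_of_isEmpty
        · exact hg.2 i j hij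
      · intro hg
        constructor
        · intro i j hij r hr
          have h0 := hg i j
          rw [hm] at h0
          simp only [if_pos hij] at h0
          have : Nonempty {r : Fin N // g (i, r) = j} := ⟨⟨r, hr⟩⟩
          rw [Nat.card_eq_zero] at h0
          rcases h0 with h0 | h0
          · exact h0.elim' this.some
          · exact absurd h0.not_finite (by simp [not_not]; infer_instance)
        · intro i j hij
          have h0 := hg i j
          simpa [hm, hij] using h0
    have E2 : {g : A → Fin n // Cond' g} ≃
        ∀ i : Fin n, {h : Fin N → Fin n // ∀ j, Nat.card {r // h r = j} = m i j} :=
      ((Equiv.subtypeEquiv (Equiv.refl _) iff1).trans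
        ((Equiv.curry (Fin n) (Fin N) (Fin n)).subtypeEquiv fun g => Iff.rfl)).trans
        (Equiv.subtypePiEquivPi)
    rw [Nat.card_congr E2, Nat.card_pi]
  -- the key natural-number identity
  have main : Nat.card {σ : Equiv.Perm A //
        (∀ (i j : Fin n), (i, j) ∈ P → ∀ r : Fin N, (σ (i, r)).1 ≠ j) ∧
        (∀ (i j : Fin n), (i, j) ∉ P →
          Nat.card {r : Fin N // (σ (i, r)).1 = j} = b)} * b ! ^ (n * (n - ℓ)) =
      N ! ^ (2 * n) := by
    rw [cardS, cardG]
    have : b ! ^ (n * (n - ℓ)) = ∏ _i : Fin n, b ! ^ (n - ℓ) := by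
      rw [Finset.prod_const, Finset.card_univ, Fintype.card_fin, ← pow_mul, mul_comm]
    rw [mul_assoc, mul_comm (N ! ^ n), ← mul_assoc, this, ← Finset.prod_mul_distrib,
      Finset.prod_congr rfl fun i _ => rowcount i, Finset.prod_const, Finset.card_univ,
      Fintype.card_fin, ← pow_add, two_mul]
  -- conclude over ℝ
  rw [eq_div_iff (by positivity)]
  exact_mod_cast congrArg (Nat.cast (R := ℝ)) main
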